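/- Weak Regularity Lemma for graphons: For every graphon W : [0,1]² → [0,1] (a symmetric Lebesgue-measurable function) and every natural number K ≥ 2, there exists a measurable partition P = (P₁, …, P_K) of [0,1] into K measurable subsets and real numbers w_{kk'} ∈ [0,1] with w_{kk'} = w_{k'k}, such that the step function W_P(x,y) = Σ_{k,k'=1}^K w_{kk'} 𝟙_{P_k × P_{k'}}(x,y) satisfies ‖W − W_P‖_□ ≤ 2/√(log K), where ‖·‖_□ denotes the cut norm. -/

import Mathlib

set_option linter.unusedSectionVars false
set_option linter.unusedVariables false

open MeasureTheory Set

namespace WRL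

noncomputable section

variable {W : ℝ → ℝ → ℝ}

lemma vol_sq01 : (volume : Measure (ℝ × ℝ)) (Set.Icc (0:ℝ) 1 ×ˢ Set.Icc (0:ℝ) 1) = 1 := by
  rw [Measure.volume_eq_prod, Measure.prod_prod, Real.volume_Icc]
  norm_num

lemma integrableOn_W (hW_meas : Measurable (fun p : ℝ × ℝ => W p.1 p.2))
    (hW_range : ∀ x ∈ Set.Icc (0:ℝ) 1, ∀ y ∈ Set.Icc (0:ℝ) 1, W x y ∈ Set.Icc (0:ℝ) 1)
    {E : Set (ℝ × ℝ)} (hE : E ⊆ Set.Icc (0:ℝ) 1 ×ˢ Set.Icc (0:ℝ) 1) :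
    IntegrableOn (fun p : ℝ × ℝ => W p.1 p.2) E := by
  have h1 : IntegrableOn (fun p : ℝ × ℝ => W p.1 p.2)
      (Set.Icc (0:ℝ) 1 ×ˢ Set.Icc (0:ℝ) 1) := by
    apply Measure.integrableOn_of_bounded (M := 1)
    · rw [vol_sq01]; exact ENNReal.one_ne_top
    · exact hW_meas.aestronglyMeasurable
    · refine (ae_restrict_iff' (measurableSet_Icc.prod measurableSet_Icc)).2
        (Filter.Eventually.of_forall ?_)
      rintro ⟨x, y⟩ ⟨hx, hy⟩
      have h := hW_range x hx y hy
      rw [Real.norm_eq_abs, abs_le]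
      exact ⟨by linarith [h.1], h.2⟩
  exact h1.mono_set hE

section Part

variable {ι : Type} [Fintype ι]

/-- measure (as a real number) of a part -/
def pm (A : ι → Set ℝ) (i : ι) : ℝ := (volume (A i)).toReal

/-- integral of W over a block -/
def bInt (W : ℝ → ℝ → ℝ) (A : ι → Set ℝ) (i j : ι) : ℝ :=
  ∫ p in (A i ×ˢ A j), W p.1 p.2

/-- block average of W -/
def cavg (W : ℝ → ℝ → ℝ) (A : ι → Set ℝ) (i j : ι) : ℝ :=
  bInt W A i j / (pm A i * pm A j)

/-- the step function -/
def stepF (W : ℝ → ℝ → ℝ) (A : ι → Set ℝ) (p : ℝ × ℝ) : ℝ :=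
  ∑ i : ι, ∑ j : ι, Set.indicator ((A i) ×ˢ (A j)) (fun _ => cavg W A i j) p

/-- energy of a partition -/
def energy (W : ℝ → ℝ → ℝ) (A : ι → Set ℝ) : ℝ :=
  ∑ i : ι, ∑ j : ι, (cavg W A i j) ^ 2 * (pm A i * pm A j)

structure IsPart (A : ι → Set ℝ) : Prop where
  meas : ∀ i, MeasurableSet (A i)
  disj : Pairwise (Function.onFun Disjoint A)
  cover : (⋃ i, A i) = Set.Icc (0:ℝ) 1

variable {A : ι → Set ℝ}

lemma IsPart.subset (hA : IsPart A) (i : ι) : A i ⊆ Set.Icc (0:ℝ) 1 :=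
  hA.cover ▸ Set.subset_iUnion A i

lemma IsPart.vol_ne_top (hA : IsPart A) (i : ι) : volume (A i) ≠ ⊤ :=
  ne_top_of_le_ne_top (by simp [Real.volume_Icc]) (measure_mono (hA.subset i))

lemma pm_nonneg (A : ι → Set ℝ) (i : ι) : 0 ≤ pm A i := ENNReal.toReal_nonneg

lemma IsPart.block_subset (hA : IsPart A) (i j : ι) :
    (A i ×ˢ A j) ⊆ Set.Icc (0:ℝ) 1 ×ˢ Set.Icc (0:ℝ) 1 :=
  Set.prod_mono (hA.subset i) (hA.subset j)

lemma IsPart.vol_block (hA : IsPart A) (i j : ι) :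
    (volume ((A i) ×ˢ (A j))).toReal = pm A i * pm A j := by
  rw [Measure.volume_eq_prod, Measure.prod_prod, ENNReal.toReal_mul]; rfl


variable (hW_meas : Measurable (fun p : ℝ × ℝ => W p.1 p.2))
  (hW_range : ∀ x ∈ Set.Icc (0:ℝ) 1, ∀ y ∈ Set.Icc (0:ℝ) 1, W x y ∈ Set.Icc (0:ℝ) 1)
include hW_meas hW_range

lemma bInt_nonneg (hA : IsPart A) (i j : ι) : 0 ≤ bInt W A i j := by
  apply setIntegral_nonneg ((hA.meas i).prod (hA.meas j))
  rintro ⟨x, y⟩ hp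
  have hx := hA.subset i hp.1
  have hy := hA.subset j hp.2
  exact (hW_range x hx y hy).1

lemma bInt_le (hA : IsPart A) (i j : ι) : bInt W A i j ≤ pm A i * pm A j := by
  have h1 : bInt W A i j ≤ ∫ _ in (A i ×ˢ A j), (1:ℝ) := by
    apply setIntegral_mono_on (integrableOn_W hW_meas hW_range (hA.block_subset i j))
      (integrableOn_const ?_) ((hA.meas i).prod (hA.meas j))
    · rintro ⟨x, y⟩ hp
      exact (hW_range x (hA.subset i hp.1) y (hA.subset j hp.2)).2
    · rw [Measure.volume_eq_prod, Measure.prod_prod]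
      exact (ENNReal.mul_lt_top (hA.vol_ne_top i).lt_top (hA.vol_ne_top j).lt_top).ne
  rw [setIntegral_const, smul_eq_mul, mul_one, measureReal_def, hA.vol_block i j] at h1
  exact h1

lemma cavg_nonneg (hA : IsPart A) (i j : ι) : 0 ≤ cavg W A i j :=
  div_nonneg (bInt_nonneg hW_meas hW_range hA i j)
    (mul_nonneg (pm_nonneg A i) (pm_nonneg A j))

lemma cavg_le_one (hA : IsPart A) (i j : ι) : cavg W A i j ≤ 1 := by
  rcases eq_or_lt_of_le (mul_nonneg (pm_nonneg A i) (pm_nonneg A j)) with h | h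
  · simp [cavg, ← h]
  · exact div_le_one_of_le₀ (bInt_le hW_meas hW_range hA i j) h.le

lemma bInt_eq_cavg_mul (hA : IsPart A) (i j : ι) :
    cavg W A i j * (pm A i * pm A j) = bInt W A i j := by
  rcases eq_or_ne (pm A i * pm A j) 0 with h | h
  · have hb : bInt W A i j = 0 := by
      have : volume ((A i) ×ˢ (A j)) = 0 := by
        have := hA.vol_block i j
        rw [h] at this
        exact (ENNReal.toReal_eq_zero_iff _).1 this |>.resolve_right
          (by rw [Measure.volume_eq_prod, Measure.prod_prod]
              exact ENNReal.mul_ne_top (hA.vol_ne_top i) (hA.vol_ne_top j))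
      unfold bInt
      rw [Measure.restrict_eq_zero.2 this, integral_zero_measure]
    rw [h, mul_zero, hb]
  · rw [cavg, div_mul_cancel₀ _ h]

lemma integral_prod_biUnion {κ κ' : Type} [Fintype κ] [Fintype κ'] {B : κ → Set ℝ}
    {C : κ' → Set ℝ}
    (hmB : ∀ u, MeasurableSet (B u)) (hdB : Pairwise (Function.onFun Disjoint B))
    (hsB : ∀ u, B u ⊆ Set.Icc (0:ℝ) 1)
    (hmC : ∀ u, MeasurableSet (C u)) (hdC : Pairwise (Function.onFun Disjoint C))
    (hsC : ∀ u, C u ⊆ Set.Icc (0:ℝ) 1) (s : Finset κ) (t : Finset κ') :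
    (∫ p in ((⋃ u ∈ s, B u) ×ˢ (⋃ v ∈ t, C v)), W p.1 p.2)
      = ∑ u ∈ s, ∑ v ∈ t, ∫ p in (B u ×ˢ C v), W p.1 p.2 := by
  have hset : ((⋃ u ∈ s, B u) ×ˢ (⋃ v ∈ t, C v))
      = ⋃ q ∈ s ×ˢ t, ((B (Prod.fst q)) ×ˢ (C (Prod.snd q))) := by
    ext ⟨x, y⟩
    simp only [Set.mem_prod, Set.mem_iUnion, Finset.mem_product, exists_prop, Prod.exists]
    constructor
    · rintro ⟨⟨u, hu, hxu⟩, ⟨v, hv, hyv⟩⟩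
      exact ⟨u, v, ⟨hu, hv⟩, hxu, hyv⟩
    · rintro ⟨u, v, ⟨hu, hv⟩, hxu, hyv⟩
      exact ⟨⟨u, hu, hxu⟩, ⟨v, hv, hyv⟩⟩
  rw [hset, integral_biUnion_finset]
  · exact Finset.sum_product s t (fun q => ∫ p in (B q.1 ×ˢ C q.2), W p.1 p.2)
  · exact fun q _ => (hmB q.1).prod (hmC q.2)
  · intro q hq q' hq' hne
    have h12 : q.1 ≠ q'.1 ∨ q.2 ≠ q'.2 := by
      by_contra hc
      push_neg at hc
      exact hne (Prod.ext hc.1 hc.2)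
    rcases h12 with h | h
    · exact Set.Disjoint.set_prod_left (hdB h) _ _
    · exact Set.Disjoint.set_prod_right (hdC h) _ _
  · exact fun q _ => integrableOn_W hW_meas hW_range (Set.prod_mono (hsB q.1) (hsC q.2))

omit hW_meas hW_range in
lemma vol_biUnion_toReal {κ : Type} [Fintype κ] {B : κ → Set ℝ}
    (hmeas : ∀ u, MeasurableSet (B u)) (hdisj : Pairwise (Function.onFun Disjoint B))
    (hfin : ∀ u, volume (B u) ≠ ⊤) (s : Finset κ) :
    (volume (⋃ u ∈ s, B u)).toReal = ∑ u ∈ s, (volume (B u)).toReal := by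
  rw [measure_biUnion_finset (hdisj.set_pairwise _) (fun u _ => hmeas u),
    ENNReal.toReal_sum (fun u _ => hfin u)]

omit hW_meas hW_range in
lemma integrableOn_stepF (hA : IsPart A) {E : Set (ℝ × ℝ)} (hE : volume E ≠ ⊤) :
    IntegrableOn (stepF W A) E := by
  haveI : IsFiniteMeasure ((volume : Measure (ℝ × ℝ)).restrict E) :=
    ⟨by rwa [Measure.restrict_apply_univ, lt_top_iff_ne_top]⟩
  apply integrable_finset_sum
  intro i _
  apply integrable_finset_sum
  intro j _
  exact (integrable_const _).indicator ((hA.meas i).prod (hA.meas j))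

omit hW_meas hW_range in
lemma setIntegral_stepF (hA : IsPart A) {S T : Set ℝ}
    (hST : volume (S ×ˢ T) ≠ ⊤) :
    (∫ p in S ×ˢ T, stepF W A p)
      = ∑ i : ι, ∑ j : ι, cavg W A i j
          * ((volume (S ∩ A i)).toReal * (volume (T ∩ A j)).toReal) := by
  haveI : IsFiniteMeasure ((volume : Measure (ℝ × ℝ)).restrict (S ×ˢ T)) :=
    ⟨by rwa [Measure.restrict_apply_univ, lt_top_iff_ne_top]⟩
  have hint : ∀ i j : ι, Integrable
      (fun p => Set.indicator ((A i) ×ˢ (A j)) (fun _ => cavg W A i j) p)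
      ((volume : Measure (ℝ × ℝ)).restrict (S ×ˢ T)) :=
    fun i j => (integrable_const _).indicator ((hA.meas i).prod (hA.meas j))
  unfold stepF
  rw [integral_finset_sum _ (fun i _ => integrable_finset_sum _ (fun j _ => hint i j))]
  refine Finset.sum_congr rfl (fun i _ => ?_)
  rw [integral_finset_sum _ (fun j _ => hint i j)]
  refine Finset.sum_congr rfl (fun j _ => ?_)
  rw [integral_indicator_const _ ((hA.meas i).prod (hA.meas j)), measureReal_def,
    Measure.restrict_apply ((hA.meas i).prod (hA.meas j)), Set.prod_inter_prod,
    Measure.volume_eq_prod, Measure.prod_prod, ENNReal.toReal_mul, smul_eq_mul]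
  rw [Set.inter_comm (A i) S, Set.inter_comm (A j) T, mul_comm]

omit hW_meas hW_range in
lemma pm_sum_eq_one (hA : IsPart A) : ∑ i : ι, pm A i = 1 := by
  have h1 : volume (⋃ i, A i) = ∑' i, volume (A i) :=
    measure_iUnion hA.disj hA.meas
  rw [hA.cover, tsum_fintype] at h1
  have : (volume (Set.Icc (0:ℝ) 1)).toReal = 1 := by
    rw [Real.volume_Icc]; norm_num
  rw [← this, h1, ENNReal.toReal_sum (fun i _ => hA.vol_ne_top i)]
  rfl

lemma energy_nonneg (hA : IsPart A) : 0 ≤ energy W A := by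
  apply Finset.sum_nonneg; intro i _
  apply Finset.sum_nonneg; intro j _
  exact mul_nonneg (sq_nonneg _) (mul_nonneg (pm_nonneg A i) (pm_nonneg A j))

lemma energy_le_one (hA : IsPart A) : energy W A ≤ 1 := by
  have h1 : energy W A ≤ ∑ i : ι, ∑ j : ι, pm A i * pm A j := by
    apply Finset.sum_le_sum; intro i _
    apply Finset.sum_le_sum; intro j _
    calc cavg W A i j ^ 2 * (pm A i * pm A j)
        ≤ 1 * (pm A i * pm A j) := by
          apply mul_le_mul_of_nonneg_right _ (mul_nonneg (pm_nonneg A i) (pm_nonneg A j))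
          exact pow_le_one₀ (cavg_nonneg hW_meas hW_range hA i j)
            (cavg_le_one hW_meas hW_range hA i j)
      _ = pm A i * pm A j := one_mul _
  rw [← Finset.sum_mul_sum, pm_sum_eq_one hA, one_mul] at h1
  exact h1

omit hW_meas hW_range in
lemma bInt_symm' (hsymm : ∀ x y, W x y = W y x) (B C : Set ℝ) :
    (∫ p in C ×ˢ B, W p.1 p.2) = ∫ p in B ×ˢ C, W p.1 p.2 := by
  have h := (Measure.measurePreserving_swap (μ := (volume : Measure ℝ))
      (ν := (volume : Measure ℝ))).setIntegral_image_emb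
    MeasurableEquiv.prodComm.measurableEmbedding (fun p : ℝ × ℝ => W p.1 p.2) (B ×ˢ C)
  rw [Set.image_swap_prod] at h
  rw [Measure.volume_eq_prod, h]
  have : (fun x : ℝ × ℝ => W (Prod.swap x).1 (Prod.swap x).2)
      = fun x : ℝ × ℝ => W x.1 x.2 := funext fun x => hsymm x.2 x.1
  rw [← Measure.volume_eq_prod]
  exact congrArg _ this

omit hW_meas hW_range in
lemma cavg_symm (hsymm : ∀ x y, W x y = W y x) (A : ι → Set ℝ) (i j : ι) :
    cavg W A i j = cavg W A j i := by
  unfold cavg bInt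
  rw [bInt_symm' hsymm, mul_comm]

/-- refinement of a partition by two sets -/
def refn (A : ι → Set ℝ) (S T : Set ℝ) : ι × Bool × Bool → Set ℝ :=
  fun u => A u.1 ∩ (bif u.2.1 then S else Sᶜ) ∩ (bif u.2.2 then T else Tᶜ)

omit hW_meas hW_range in
lemma refn_isPart (hA : IsPart A) {S T : Set ℝ} (hS : MeasurableSet S)
    (hT : MeasurableSet T) : IsPart (refn A S T) := by
  refine ⟨?_, ?_, ?_⟩
  · rintro ⟨i, a, b⟩
    exact ((hA.meas i).inter (by cases a <;> simp [hS, hS.compl])).inter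
      (by cases b <;> simp [hT, hT.compl])
  · rintro ⟨i, a, b⟩ ⟨j, a', b'⟩ hne
    refine Set.disjoint_left.2 fun x hx hx' => ?_
    obtain ⟨⟨hxA, hxS⟩, hxT⟩ := hx
    obtain ⟨⟨hxA', hxS'⟩, hxT'⟩ := hx'
    have hij : i = j := by
      by_contra hij
      exact Set.disjoint_left.1 (hA.disj hij) hxA hxA'
    have ha : a = a' := by cases a <;> cases a' <;> simp_all
    have hb : b = b' := by cases b <;> cases b' <;> simp_all
    exact hne (by simp [hij, ha, hb])
  · apply Set.Subset.antisymm
    · exact Set.iUnion_subset fun u =>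
        (Set.inter_subset_left.trans Set.inter_subset_left).trans (hA.subset u.1)
    · intro x hx
      rw [← hA.cover] at hx
      obtain ⟨i, hi⟩ := Set.mem_iUnion.1 hx
      by_cases hxS : x ∈ S <;> by_cases hxT : x ∈ T
      · exact Set.mem_iUnion.2 ⟨(i, true, true), ⟨⟨hi, hxS⟩, hxT⟩⟩
      · exact Set.mem_iUnion.2 ⟨(i, true, false), ⟨⟨hi, hxS⟩, hxT⟩⟩
      · exact Set.mem_iUnion.2 ⟨(i, false, true), ⟨⟨hi, hxS⟩, hxT⟩⟩
      · exact Set.mem_iUnion.2 ⟨(i, false, false), ⟨⟨hi, hxS⟩, hxT⟩⟩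

omit hW_meas hW_range in
lemma refn_decomp (A : ι → Set ℝ) (S T : Set ℝ) (i : ι) :
    (⋃ c ∈ (Finset.univ : Finset (Bool × Bool)), refn A S T (i, c)) = A i := by
  apply Set.Subset.antisymm
  · refine Set.iUnion₂_subset fun c _ => ?_
    exact Set.inter_subset_left.trans Set.inter_subset_left
  · intro x hx
    by_cases hxS : x ∈ S <;> by_cases hxT : x ∈ T
    · exact Set.mem_iUnion₂.2 ⟨(true, true), Finset.mem_univ _, ⟨⟨hx, hxS⟩, hxT⟩⟩
    · exact Set.mem_iUnion₂.2 ⟨(true, false), Finset.mem_univ _, ⟨⟨hx, hxS⟩, hxT⟩⟩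
    · exact Set.mem_iUnion₂.2 ⟨(false, true), Finset.mem_univ _, ⟨⟨hx, hxS⟩, hxT⟩⟩
    · exact Set.mem_iUnion₂.2 ⟨(false, false), Finset.mem_univ _, ⟨⟨hx, hxS⟩, hxT⟩⟩

omit hW_meas hW_range in
lemma refn_decomp_S (A : ι → Set ℝ) {S : Set ℝ} (T : Set ℝ)
    (hS1 : S ⊆ Set.Icc (0:ℝ) 1) (hcov : (⋃ i, A i) = Set.Icc (0:ℝ) 1) :
    (⋃ q ∈ (Finset.univ : Finset (ι × Bool)), refn A S T (q.1, true, q.2)) = S := by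
  apply Set.Subset.antisymm
  · refine Set.iUnion₂_subset fun q _ => ?_
    exact Set.inter_subset_left.trans Set.inter_subset_right
  · intro x hx
    have : x ∈ ⋃ i, A i := hcov.symm ▸ hS1 hx
    obtain ⟨i, hi⟩ := Set.mem_iUnion.1 this
    by_cases hxT : x ∈ T
    · exact Set.mem_iUnion₂.2 ⟨(i, true), Finset.mem_univ _, ⟨⟨hi, hx⟩, hxT⟩⟩
    · exact Set.mem_iUnion₂.2 ⟨(i, false), Finset.mem_univ _, ⟨⟨hi, hx⟩, hxT⟩⟩

omit hW_meas hW_range in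
lemma refn_decomp_T (A : ι → Set ℝ) (S : Set ℝ) {T : Set ℝ}
    (hT1 : T ⊆ Set.Icc (0:ℝ) 1) (hcov : (⋃ i, A i) = Set.Icc (0:ℝ) 1) :
    (⋃ q ∈ (Finset.univ : Finset (ι × Bool)), refn A S T (q.1, q.2, true)) = T := by
  apply Set.Subset.antisymm
  · refine Set.iUnion₂_subset fun q _ => ?_
    exact Set.inter_subset_right
  · intro x hx
    have : x ∈ ⋃ i, A i := hcov.symm ▸ hT1 hx
    obtain ⟨i, hi⟩ := Set.mem_iUnion.1 this
    by_cases hxS : x ∈ S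
    · exact Set.mem_iUnion₂.2 ⟨(i, true), Finset.mem_univ _, ⟨⟨hi, hxS⟩, hx⟩⟩
    · exact Set.mem_iUnion₂.2 ⟨(i, false), Finset.mem_univ _, ⟨⟨hi, hxS⟩, hx⟩⟩

omit hW_meas hW_range in
lemma refn_decomp_SA (A : ι → Set ℝ) {S : Set ℝ} (T : Set ℝ) (i : ι) :
    (⋃ b ∈ (Finset.univ : Finset Bool), refn A S T (i, true, b)) = S ∩ A i := by
  apply Set.Subset.antisymm
  · refine Set.iUnion₂_subset fun b _ => ?_
    rintro x ⟨⟨hxA, hxS⟩, _⟩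
    exact ⟨by simpa using hxS, hxA⟩
  · rintro x ⟨hxS, hxA⟩
    by_cases hxT : x ∈ T
    · exact Set.mem_iUnion₂.2 ⟨true, Finset.mem_univ _, ⟨⟨hxA, hxS⟩, hxT⟩⟩
    · exact Set.mem_iUnion₂.2 ⟨false, Finset.mem_univ _, ⟨⟨hxA, hxS⟩, hxT⟩⟩

omit hW_meas hW_range in
lemma refn_decomp_TA (A : ι → Set ℝ) (S : Set ℝ) {T : Set ℝ} (j : ι) :
    (⋃ a ∈ (Finset.univ : Finset Bool), refn A S T (j, a, true)) = T ∩ A j := by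
  apply Set.Subset.antisymm
  · refine Set.iUnion₂_subset fun a _ => ?_
    rintro x ⟨⟨hxA, _⟩, hxT⟩
    exact ⟨by simpa using hxT, hxA⟩
  · rintro x ⟨hxT, hxA⟩
    by_cases hxS : x ∈ S
    · exact Set.mem_iUnion₂.2 ⟨true, Finset.mem_univ _, ⟨⟨hxA, hxS⟩, hxT⟩⟩
    · exact Set.mem_iUnion₂.2 ⟨false, Finset.mem_univ _, ⟨⟨hxA, hxS⟩, hxT⟩⟩

omit hW_meas hW_range in
lemma refn_pm_sum (hA : IsPart A) {S T : Set ℝ} (hS : MeasurableSet S)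
    (hT : MeasurableSet T) (i : ι) :
    ∑ c : Bool × Bool, pm (refn A S T) (i, c) = pm A i := by
  have hB := refn_isPart hA hS hT
  have := vol_biUnion_toReal (B := fun c : Bool × Bool => refn A S T (i, c))
    (fun c => hB.meas (i, c))
    (fun c c' hcc => hB.disj (by simp [Prod.ext_iff, hcc] : (i, c) ≠ (i, c')))
    (fun c => hB.vol_ne_top (i, c)) Finset.univ
  rw [refn_decomp A S T i] at this
  exact this.symm

omit hW_meas hW_range in
lemma sum_group (G : (ι × Bool × Bool) → (ι × Bool × Bool) → ℝ) :
    (∑ u : ι × Bool × Bool, ∑ v : ι × Bool × Bool, G u v)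
      = ∑ i : ι, ∑ j : ι, ∑ c : Bool × Bool, ∑ d : Bool × Bool, G (i, c) (j, d) := by
  rw [Fintype.sum_prod_type]
  refine Finset.sum_congr rfl fun i _ => ?_
  rw [Finset.sum_comm, Fintype.sum_prod_type]
  exact Finset.sum_congr rfl fun j _ => Finset.sum_comm

omit hW_meas hW_range in
lemma sum_group2 (G : (ι × Bool) → (ι × Bool) → ℝ) :
    (∑ q : ι × Bool, ∑ r : ι × Bool, G q r)
      = ∑ i : ι, ∑ j : ι, ∑ b : Bool, ∑ b' : Bool, G (i, b) (j, b') := by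
  rw [Fintype.sum_prod_type]
  refine Finset.sum_congr rfl fun i _ => ?_
  rw [Finset.sum_comm, Fintype.sum_prod_type]
  exact Finset.sum_congr rfl fun j _ => Finset.sum_comm

lemma refn_block_sum (hA : IsPart A) {S T : Set ℝ} (hS : MeasurableSet S)
    (hT : MeasurableSet T) (i j : ι) :
    (∑ c : Bool × Bool, ∑ d : Bool × Bool, bInt W (refn A S T) (i, c) (j, d))
      = bInt W A i j := by
  have hB := refn_isPart hA hS hT
  have h := integral_prod_biUnion hW_meas hW_range
    (B := fun c : Bool × Bool => refn A S T (i, c))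
    (C := fun d : Bool × Bool => refn A S T (j, d))
    (fun c => hB.meas (i, c))
    (fun c c' hcc => hB.disj (by simp [Prod.ext_iff, hcc] : (i, c) ≠ (i, c')))
    (fun c => hB.subset (i, c))
    (fun d => hB.meas (j, d))
    (fun d d' hdd => hB.disj (by simp [Prod.ext_iff, hdd] : (j, d) ≠ (j, d')))
    (fun d => hB.subset (j, d)) Finset.univ Finset.univ
  rw [refn_decomp A S T i, refn_decomp A S T j] at h
  exact h.symm

lemma refn_cavg_sum (hA : IsPart A) {S T : Set ℝ} (hS : MeasurableSet S)
    (hT : MeasurableSet T) (i j : ι) :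
    (∑ c : Bool × Bool, ∑ d : Bool × Bool,
        cavg W (refn A S T) (i, c) (j, d) * (pm (refn A S T) (i, c) * pm (refn A S T) (j, d)))
      = cavg W A i j * (pm A i * pm A j) := by
  have hB := refn_isPart hA hS hT
  rw [bInt_eq_cavg_mul hW_meas hW_range hA i j, ← refn_block_sum hW_meas hW_range hA hS hT i j]
  exact Finset.sum_congr rfl fun c _ => Finset.sum_congr rfl fun d _ =>
    bInt_eq_cavg_mul hW_meas hW_range hB (i, c) (j, d)

lemma energy_refn_eq (hA : IsPart A) {S T : Set ℝ} (hS : MeasurableSet S)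
    (hT : MeasurableSet T) :
    energy W (refn A S T) = energy W A
      + ∑ u : ι × Bool × Bool, ∑ v : ι × Bool × Bool,
          (cavg W (refn A S T) u v - cavg W A u.1 v.1)^2
            * (pm (refn A S T) u * pm (refn A S T) v) := by
  rw [show (∑ u : ι × Bool × Bool, ∑ v : ι × Bool × Bool,
        (cavg W (refn A S T) u v - cavg W A u.1 v.1)^2
          * (pm (refn A S T) u * pm (refn A S T) v))
      = ∑ i : ι, ∑ j : ι, ∑ c : Bool × Bool, ∑ d : Bool × Bool,
          (cavg W (refn A S T) (i, c) (j, d) - cavg W A i j)^2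
            * (pm (refn A S T) (i, c) * pm (refn A S T) (j, d))
    from sum_group _]
  rw [show energy W (refn A S T)
      = ∑ i : ι, ∑ j : ι, ∑ c : Bool × Bool, ∑ d : Bool × Bool,
          (cavg W (refn A S T) (i, c) (j, d))^2
            * (pm (refn A S T) (i, c) * pm (refn A S T) (j, d))
    from sum_group _]
  rw [energy, ← Finset.sum_add_distrib]
  refine Finset.sum_congr rfl fun i _ => ?_
  rw [← Finset.sum_add_distrib]
  refine Finset.sum_congr rfl fun j _ => ?_
  have h1 := refn_cavg_sum hW_meas hW_range hA hS hT i j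
  have expand : ∀ c d : Bool × Bool,
      (cavg W (refn A S T) (i, c) (j, d) - cavg W A i j)^2
          * (pm (refn A S T) (i, c) * pm (refn A S T) (j, d))
        = (cavg W (refn A S T) (i, c) (j, d))^2
            * (pm (refn A S T) (i, c) * pm (refn A S T) (j, d))
          - (2 * cavg W A i j) * (cavg W (refn A S T) (i, c) (j, d)
              * (pm (refn A S T) (i, c) * pm (refn A S T) (j, d)))
          + (cavg W A i j)^2
              * (pm (refn A S T) (i, c) * pm (refn A S T) (j, d)) := by
    intro c d; ring
  simp only [expand, Finset.sum_add_distrib, Finset.sum_sub_distrib, ← Finset.mul_sum]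
  rw [h1, ← Finset.sum_mul, refn_pm_sum hA hS hT i, refn_pm_sum hA hS hT j]
  ring

omit hW_meas hW_range in
lemma pair_ne_S {q q' : ι × Bool} (h : q ≠ q') :
    ((q.1, true, q.2) : ι × Bool × Bool) ≠ (q'.1, true, q'.2) := by
  intro hc
  have h1 := congrArg (fun p : ι × Bool × Bool => p.1) hc
  have h2 := congrArg (fun p : ι × Bool × Bool => p.2.2) hc
  exact h (Prod.ext h1 h2)

omit hW_meas hW_range in
lemma pair_ne_T {q q' : ι × Bool} (h : q ≠ q') :
    ((q.1, q.2, true) : ι × Bool × Bool) ≠ (q'.1, q'.2, true) := by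
  intro hc
  have h1 := congrArg (fun p : ι × Bool × Bool => p.1) hc
  have h2 := congrArg (fun p : ι × Bool × Bool => p.2.1) hc
  exact h (Prod.ext h1 h2)

omit hW_meas hW_range in
lemma vol_S_toReal (hA : IsPart A) {S T : Set ℝ} (hS : MeasurableSet S)
    (hT : MeasurableSet T) (hS1 : S ⊆ Set.Icc (0:ℝ) 1) :
    (∑ q : ι × Bool, pm (refn A S T) (q.1, true, q.2)) = (volume S).toReal := by
  have hB := refn_isPart hA hS hT
  have h := vol_biUnion_toReal (B := fun q : ι × Bool => refn A S T (q.1, true, q.2))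
    (fun q => hB.meas _) (fun q q' hqq => hB.disj (pair_ne_S hqq))
    (fun q => hB.vol_ne_top _) Finset.univ
  rw [refn_decomp_S A T hS1 hA.cover] at h
  exact h.symm

omit hW_meas hW_range in
lemma vol_T_toReal (hA : IsPart A) {S T : Set ℝ} (hS : MeasurableSet S)
    (hT : MeasurableSet T) (hT1 : T ⊆ Set.Icc (0:ℝ) 1) :
    (∑ q : ι × Bool, pm (refn A S T) (q.1, q.2, true)) = (volume T).toReal := by
  have hB := refn_isPart hA hS hT
  have h := vol_biUnion_toReal (B := fun q : ι × Bool => refn A S T (q.1, q.2, true))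
    (fun q => hB.meas _) (fun q q' hqq => hB.disj (pair_ne_T hqq))
    (fun q => hB.vol_ne_top _) Finset.univ
  rw [refn_decomp_T A S hT1 hA.cover] at h
  exact h.symm

lemma cut_eq (hA : IsPart A) {S T : Set ℝ} (hS : MeasurableSet S)
    (hT : MeasurableSet T) (hS1 : S ⊆ Set.Icc (0:ℝ) 1) (hT1 : T ⊆ Set.Icc (0:ℝ) 1) :
    (∫ p in S ×ˢ T, (W p.1 p.2 - stepF W A p))
      = ∑ q : ι × Bool, ∑ r : ι × Bool,
          (cavg W (refn A S T) (q.1, true, q.2) (r.1, r.2, true) - cavg W A q.1 r.1)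
            * (pm (refn A S T) (q.1, true, q.2) * pm (refn A S T) (r.1, r.2, true)) := by
  have hB := refn_isPart hA hS hT
  have hSTsub : S ×ˢ T ⊆ Set.Icc (0:ℝ) 1 ×ˢ Set.Icc (0:ℝ) 1 := Set.prod_mono hS1 hT1
  have hSTfin : volume (S ×ˢ T) ≠ ⊤ :=
    ne_top_of_le_ne_top (by rw [vol_sq01]; exact ENNReal.one_ne_top) (measure_mono hSTsub)
  rw [integral_sub (integrableOn_W hW_meas hW_range hSTsub) (integrableOn_stepF hA hSTfin)]
  have hW : (∫ p in S ×ˢ T, W p.1 p.2)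
      = ∑ q : ι × Bool, ∑ r : ι × Bool,
          cavg W (refn A S T) (q.1, true, q.2) (r.1, r.2, true)
            * (pm (refn A S T) (q.1, true, q.2) * pm (refn A S T) (r.1, r.2, true)) := by
    have hdec := integral_prod_biUnion hW_meas hW_range
      (B := fun q : ι × Bool => refn A S T (q.1, true, q.2))
      (C := fun r : ι × Bool => refn A S T (r.1, r.2, true))
      (fun q => hB.meas _) (fun q q' hqq => hB.disj (pair_ne_S hqq))
      (fun q => hB.subset _)
      (fun r => hB.meas _) (fun r r' hrr => hB.disj (pair_ne_T hrr))
      (fun r => hB.subset _) Finset.univ Finset.univ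
    rw [refn_decomp_S A T hS1 hA.cover, refn_decomp_T A S hT1 hA.cover] at hdec
    rw [hdec]
    exact Finset.sum_congr rfl fun q _ => Finset.sum_congr rfl fun r _ =>
      (bInt_eq_cavg_mul hW_meas hW_range hB _ _).symm
  have hstep : (∫ p in S ×ˢ T, stepF W A p)
      = ∑ q : ι × Bool, ∑ r : ι × Bool,
          cavg W A q.1 r.1
            * (pm (refn A S T) (q.1, true, q.2) * pm (refn A S T) (r.1, r.2, true)) := by
    rw [setIntegral_stepF hA hSTfin,
      sum_group2 (fun q r => cavg W A q.1 r.1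
        * (pm (refn A S T) (q.1, true, q.2) * pm (refn A S T) (r.1, r.2, true)))]
    refine Finset.sum_congr rfl fun i _ => Finset.sum_congr rfl fun j _ => ?_
    have hSi : (volume (S ∩ A i)).toReal = ∑ b : Bool, pm (refn A S T) (i, true, b) := by
      have h := vol_biUnion_toReal (B := fun b : Bool => refn A S T (i, true, b))
        (fun b => hB.meas _)
        (fun b b' hbb => hB.disj (by simp [Prod.ext_iff, hbb] : ((i, true, b) : ι × Bool × Bool) ≠ (i, true, b')))
        (fun b => hB.vol_ne_top _) Finset.univ
      rw [refn_decomp_SA A T i] at h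
      exact h
    have hTj : (volume (T ∩ A j)).toReal = ∑ b : Bool, pm (refn A S T) (j, b, true) := by
      have h := vol_biUnion_toReal (B := fun b : Bool => refn A S T (j, b, true))
        (fun b => hB.meas _)
        (fun b b' hbb => hB.disj (by simp [Prod.ext_iff, hbb] : ((j, b, true) : ι × Bool × Bool) ≠ (j, b', true)))
        (fun b => hB.vol_ne_top _) Finset.univ
      rw [refn_decomp_TA A S j] at h
      exact h
    rw [hSi, hTj, Finset.sum_mul_sum]
    simp only [Finset.mul_sum]
  rw [hW, hstep, ← Finset.sum_sub_distrib]
  refine Finset.sum_congr rfl fun q _ => ?_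
  rw [← Finset.sum_sub_distrib]
  refine Finset.sum_congr rfl fun r _ => ?_
  ring

omit hW_meas hW_range in
lemma sum_comp_le {σ τ : Type} [Fintype σ] [Fintype τ] {e : σ → τ}
    (he : Function.Injective e) (F : τ → ℝ) (hF : ∀ w, 0 ≤ F w) :
    ∑ z : σ, F (e z) ≤ ∑ w : τ, F w := by
  rw [show (∑ z : σ, F (e z)) = ∑ w ∈ Finset.univ.map ⟨e, he⟩, F w from
    (Finset.sum_map Finset.univ ⟨e, he⟩ F).symm]
  exact Finset.sum_le_sum_of_subset_of_nonneg (Finset.subset_univ _) (fun w _ _ => hF w)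

omit hW_meas hW_range in
lemma vol_toReal_le_one {S : Set ℝ} (hS1 : S ⊆ Set.Icc (0:ℝ) 1) :
    (volume S).toReal ≤ 1 := by
  have h1 : volume S ≤ volume (Set.Icc (0:ℝ) 1) := measure_mono hS1
  rw [Real.volume_Icc] at h1
  have h2 : volume S ≤ 1 := by simpa using h1
  calc (volume S).toReal ≤ (1 : ENNReal).toReal :=
      ENNReal.toReal_mono ENNReal.one_ne_top h2
    _ = 1 := by simp

lemma cut_sq_le (hA : IsPart A) {S T : Set ℝ} (hS : MeasurableSet S)
    (hT : MeasurableSet T) (hS1 : S ⊆ Set.Icc (0:ℝ) 1) (hT1 : T ⊆ Set.Icc (0:ℝ) 1) :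
    (∫ p in S ×ˢ T, (W p.1 p.2 - stepF W A p))^2
      ≤ ∑ u : ι × Bool × Bool, ∑ v : ι × Bool × Bool,
          (cavg W (refn A S T) u v - cavg W A u.1 v.1)^2
            * (pm (refn A S T) u * pm (refn A S T) v) := by
  have hB := refn_isPart hA hS hT
  set m2 : (ι × Bool) × (ι × Bool) → ℝ := fun z =>
    pm (refn A S T) (z.1.1, true, z.1.2) * pm (refn A S T) (z.2.1, z.2.2, true) with hm2
  set dc : (ι × Bool) × (ι × Bool) → ℝ := fun z =>
    cavg W (refn A S T) (z.1.1, true, z.1.2) (z.2.1, z.2.2, true) - cavg W A z.1.1 z.2.1 with hdc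
  have hm2nn : ∀ z, 0 ≤ m2 z := fun z => mul_nonneg (pm_nonneg _ _) (pm_nonneg _ _)
  have hcut : (∫ p in S ×ˢ T, (W p.1 p.2 - stepF W A p))
      = ∑ z : (ι × Bool) × (ι × Bool), dc z * m2 z := by
    rw [cut_eq hW_meas hW_range hA hS hT hS1 hT1]
    exact (Fintype.sum_prod_type (f := fun z : (ι × Bool) × (ι × Bool) => dc z * m2 z)).symm
  have hcs := Finset.sum_mul_sq_le_sq_mul_sq Finset.univ
    (fun z => Real.sqrt (m2 z)) (fun z => dc z * Real.sqrt (m2 z))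
  have heq1 : ∀ z : (ι × Bool) × (ι × Bool),
      Real.sqrt (m2 z) * (dc z * Real.sqrt (m2 z)) = dc z * m2 z := by
    intro z
    rw [mul_comm (Real.sqrt (m2 z)) (dc z * Real.sqrt (m2 z)), mul_assoc,
      Real.mul_self_sqrt (hm2nn z)]
  have heq2 : ∀ z : (ι × Bool) × (ι × Bool), Real.sqrt (m2 z) ^ 2 = m2 z :=
    fun z => Real.sq_sqrt (hm2nn z)
  have heq3 : ∀ z : (ι × Bool) × (ι × Bool),
      (dc z * Real.sqrt (m2 z)) ^ 2 = dc z ^ 2 * m2 z := by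
    intro z
    rw [mul_pow, heq2]
  simp only [heq1, heq2, heq3] at hcs
  have hsum_m2 : (∑ z : (ι × Bool) × (ι × Bool), m2 z) ≤ 1 := by
    have : (∑ z : (ι × Bool) × (ι × Bool), m2 z)
        = (∑ q : ι × Bool, pm (refn A S T) (q.1, true, q.2))
          * ∑ r : ι × Bool, pm (refn A S T) (r.1, r.2, true) := by
      rw [Finset.sum_mul_sum, Fintype.sum_prod_type]
    rw [this, vol_S_toReal hA hS hT hS1, vol_T_toReal hA hS hT hT1]
    have hSle : (volume S).toReal ≤ 1 := vol_toReal_le_one hS1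
    have hTle : (volume T).toReal ≤ 1 := vol_toReal_le_one hT1
    calc (volume S).toReal * (volume T).toReal ≤ 1 * 1 :=
      mul_le_mul hSle hTle ENNReal.toReal_nonneg one_pos.le
    _ = 1 := by norm_num
  have hsub : (∑ z : (ι × Bool) × (ι × Bool), dc z ^ 2 * m2 z)
      ≤ ∑ u : ι × Bool × Bool, ∑ v : ι × Bool × Bool,
          (cavg W (refn A S T) u v - cavg W A u.1 v.1)^2
            * (pm (refn A S T) u * pm (refn A S T) v) := by
    rw [← Fintype.sum_prod_type (f := fun w : (ι × Bool × Bool) × (ι × Bool × Bool) =>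
      (cavg W (refn A S T) w.1 w.2 - cavg W A w.1.1 w.2.1)^2
        * (pm (refn A S T) w.1 * pm (refn A S T) w.2))]
    have hinj : Function.Injective (fun z : (ι × Bool) × (ι × Bool) =>
        (((z.1.1, true, z.1.2) : ι × Bool × Bool), ((z.2.1, z.2.2, true) : ι × Bool × Bool))) := by
      rintro ⟨⟨i, b⟩, ⟨j, b'⟩⟩ ⟨⟨i2, c⟩, ⟨j2, c'⟩⟩ h
      simp only [Prod.mk.injEq] at h
      obtain ⟨⟨h1, -, h2⟩, ⟨h3, h4, -⟩⟩ := h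
      subst h1; subst h2; subst h3; subst h4; rfl
    exact sum_comp_le hinj
      (fun w : (ι × Bool × Bool) × (ι × Bool × Bool) =>
        (cavg W (refn A S T) w.1 w.2 - cavg W A w.1.1 w.2.1)^2
          * (pm (refn A S T) w.1 * pm (refn A S T) w.2))
      (fun w => mul_nonneg (sq_nonneg _)
        (mul_nonneg (pm_nonneg _ _) (pm_nonneg _ _)))
  have hnn2 : 0 ≤ ∑ z : (ι × Bool) × (ι × Bool), dc z ^ 2 * m2 z :=
    Finset.sum_nonneg fun z _ => mul_nonneg (sq_nonneg _) (hm2nn z)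
  calc (∫ p in S ×ˢ T, (W p.1 p.2 - stepF W A p))^2
      = (∑ z : (ι × Bool) × (ι × Bool), dc z * m2 z)^2 := by rw [hcut]
    _ ≤ (∑ z : (ι × Bool) × (ι × Bool), m2 z)
        * ∑ z : (ι × Bool) × (ι × Bool), dc z ^ 2 * m2 z := hcs
    _ ≤ 1 * ∑ z : (ι × Bool) × (ι × Bool), dc z ^ 2 * m2 z :=
      mul_le_mul_of_nonneg_right hsum_m2 hnn2
    _ = ∑ z : (ι × Bool) × (ι × Bool), dc z ^ 2 * m2 z := one_mul _
    _ ≤ _ := hsub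

lemma energy_refn_ge (hA : IsPart A) {S T : Set ℝ} (hS : MeasurableSet S)
    (hT : MeasurableSet T) (hS1 : S ⊆ Set.Icc (0:ℝ) 1) (hT1 : T ⊆ Set.Icc (0:ℝ) 1)
    {ε : ℝ} (hε : 0 ≤ ε)
    (hcut : ε ≤ |∫ p in S ×ˢ T, (W p.1 p.2 - stepF W A p)|) :
    energy W A + ε^2 ≤ energy W (refn A S T) := by
  have h1 := cut_sq_le hW_meas hW_range hA hS hT hS1 hT1
  have h2 := energy_refn_eq hW_meas hW_range hA hS hT
  have h3 : ε^2 ≤ |∫ p in S ×ˢ T, (W p.1 p.2 - stepF W A p)|^2 :=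
    pow_le_pow_left₀ hε hcut 2
  rw [sq_abs] at h3
  linarith

/-- A partition is ε-good if all cut integrals are small. -/
def Good (W : ℝ → ℝ → ℝ) (A : ι → Set ℝ) (ε : ℝ) : Prop :=
  ∀ S T : Set ℝ, MeasurableSet S → MeasurableSet T →
    S ⊆ Set.Icc (0:ℝ) 1 → T ⊆ Set.Icc (0:ℝ) 1 →
    |∫ p in S ×ˢ T, (W p.1 p.2 - stepF W A p)| ≤ ε

end Part

variable {W : ℝ → ℝ → ℝ}

lemma iterate (hW_meas : Measurable (fun p : ℝ × ℝ => W p.1 p.2))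
    (hW_range : ∀ x ∈ Set.Icc (0:ℝ) 1, ∀ y ∈ Set.Icc (0:ℝ) 1, W x y ∈ Set.Icc (0:ℝ) 1)
    {ε : ℝ} (hε : 0 < ε) (n : ℕ) :
    (∃ (ι : Type) (_ : Fintype ι) (A : ι → Set ℝ),
        IsPart A ∧ Fintype.card ι ≤ 4^n ∧ Good W A ε)
    ∨ (∃ (ι : Type) (_ : Fintype ι) (A : ι → Set ℝ),
        IsPart A ∧ Fintype.card ι ≤ 4^n ∧ (n : ℝ) * ε^2 ≤ energy W A) := by
  induction n with
  | zero =>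
    right
    have hP : IsPart (fun _ : Unit => Set.Icc (0:ℝ) 1) :=
      ⟨fun _ => measurableSet_Icc, Subsingleton.pairwise, Set.iUnion_const _⟩
    exact ⟨Unit, inferInstance, _, hP, by simp,
      by simpa using energy_nonneg hW_meas hW_range hP⟩
  | succ n ih =>
    have hpow : (4:ℕ)^n ≤ 4^(n+1) := Nat.pow_le_pow_right (by norm_num) (Nat.le_succ n)
    rcases ih with ⟨ι, hf, A, hA, hcard, hgood⟩ | ⟨ι, hf, A, hA, hcard, hen⟩
    · exact Or.inl ⟨ι, hf, A, hA, le_trans hcard hpow, hgood⟩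
    · by_cases hg : Good W A ε
      · exact Or.inl ⟨ι, hf, A, hA, le_trans hcard hpow, hg⟩
      · right
        unfold Good at hg
        push_neg at hg
        obtain ⟨S, T, hS, hT, hS1, hT1, hcut⟩ := hg
        refine ⟨ι × Bool × Bool, inferInstance, refn A S T, refn_isPart hA hS hT, ?_, ?_⟩
        · have hcc : Fintype.card (ι × Bool × Bool) = Fintype.card ι * 4 := by
            simp [Fintype.card_prod]
          rw [hcc, pow_succ]
          exact Nat.mul_le_mul_right 4 hcard
        · have hstep := energy_refn_ge hW_meas hW_range hA hS hT hS1 hT1 hε.le hcut.le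
          have hc : ((n + 1 : ℕ) : ℝ) * ε^2 = (n : ℝ) * ε^2 + ε^2 := by
            push_cast
            ring
          rw [hc]
          linarith

lemma pad (hW_meas : Measurable (fun p : ℝ × ℝ => W p.1 p.2))
    (hW_symm : ∀ x y, W x y = W y x)
    (hW_range : ∀ x ∈ Set.Icc (0:ℝ) 1, ∀ y ∈ Set.Icc (0:ℝ) 1, W x y ∈ Set.Icc (0:ℝ) 1)
    {ι : Type} [Fintype ι] {A : ι → Set ℝ} (hA : IsPart A) {ε : ℝ}
    (hgood : Good W A ε) {K : ℕ} (hcard : Fintype.card ι ≤ K) :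
    ∃ P : Fin K → Set ℝ,
      (∀ k, MeasurableSet (P k)) ∧
      (Pairwise (Function.onFun Disjoint P)) ∧
      (⋃ k, P k) = Set.Icc (0:ℝ) 1 ∧
      ∃ w : Fin K → Fin K → ℝ,
        (∀ k k', w k k' ∈ Set.Icc (0:ℝ) 1) ∧
        (∀ k k', w k k' = w k' k) ∧
        ∀ S T : Set ℝ, MeasurableSet S → MeasurableSet T →
          S ⊆ Set.Icc (0:ℝ) 1 → T ⊆ Set.Icc (0:ℝ) 1 →
          |∫ p in S ×ˢ T,
              (W p.1 p.2 -
                ∑ k : Fin K, ∑ k' : Fin K,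
                  Set.indicator ((P k) ×ˢ (P k')) (fun _ => w k k') p)|
            ≤ ε := by
  obtain ⟨e⟩ : Nonempty (ι ↪ Fin K) :=
    Function.Embedding.nonempty_of_card_le (by simpa using hcard)
  classical
  set P : Fin K → Set ℝ := fun k => Function.extend e A (fun _ => (∅ : Set ℝ)) k with hP
  set w : Fin K → Fin K → ℝ := fun k k' =>
    Function.extend e
      (fun i => Function.extend e (fun j => cavg W A i j) (fun _ => (0:ℝ)) k')
      (fun _ => (0:ℝ)) k with hw
  have hPe : ∀ i : ι, P (e i) = A i := fun i => e.injective.extend_apply A _ i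
  have hPno : ∀ k : Fin K, (¬ ∃ i, e i = k) → P k = ∅ :=
    fun k h => Function.extend_apply' _ _ _ h
  have hwe : ∀ i j : ι, w (e i) (e j) = cavg W A i j := by
    intro i j
    rw [hw]
    simp only
    rw [e.injective.extend_apply, e.injective.extend_apply]
  have hwno1 : ∀ k k' : Fin K, (¬ ∃ i, e i = k) → w k k' = 0 :=
    fun k k' h => Function.extend_apply' _ _ _ h
  have hwno2 : ∀ k k' : Fin K, (¬ ∃ j, e j = k') → w k k' = 0 := by
    intro k k' h
    by_cases hk : ∃ i, e i = k
    · obtain ⟨i, rfl⟩ := hk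
      rw [hw]
      simp only
      rw [e.injective.extend_apply]
      exact Function.extend_apply' _ _ _ h
    · exact hwno1 k k' hk
  have hstep : ∀ p : ℝ × ℝ,
      (∑ k : Fin K, ∑ k' : Fin K,
          Set.indicator ((P k) ×ˢ (P k')) (fun _ => w k k') p) = stepF W A p := by
    intro p
    have houter : ∀ k ∈ Finset.univ, k ∉ Finset.univ.map e →
        (∑ k' : Fin K, Set.indicator ((P k) ×ˢ (P k')) (fun _ => w k k') p) = 0 := by
      intro k _ hk
      have hk' : ¬ ∃ i, e i = k := by simpa [Finset.mem_map] using hk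
      refine Finset.sum_eq_zero fun k' _ => ?_
      rw [hPno k hk', Set.empty_prod, Set.indicator_empty]
    rw [← Finset.sum_subset (Finset.subset_univ (Finset.univ.map e)) houter,
      Finset.sum_map]
    unfold stepF
    refine Finset.sum_congr rfl fun i _ => ?_
    have hinner : ∀ k' ∈ Finset.univ, k' ∉ Finset.univ.map e →
        Set.indicator ((P (e i)) ×ˢ (P k')) (fun _ => w (e i) k') p = 0 := by
      intro k' _ hk
      have hk' : ¬ ∃ j, e j = k' := by simpa [Finset.mem_map] using hk
      rw [hPno k' hk', Set.prod_empty, Set.indicator_empty]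
    rw [← Finset.sum_subset (Finset.subset_univ (Finset.univ.map e)) hinner,
      Finset.sum_map]
    refine Finset.sum_congr rfl fun j _ => ?_
    rw [hPe i, hPe j, hwe i j]
  have hrange : ∀ k : Fin K, MeasurableSet (P k) := by
    intro k
    by_cases hk : ∃ i, e i = k
    · obtain ⟨i, rfl⟩ := hk
      rw [hPe i]
      exact hA.meas i
    · rw [hPno k hk]
      exact MeasurableSet.empty
  refine ⟨P, hrange, ?_, ?_, w, ?_, ?_, ?_⟩
  · intro k k' hne
    by_cases hk : ∃ i, e i = k
    · obtain ⟨i, rfl⟩ := hk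
      by_cases hk' : ∃ j, e j = k'
      · obtain ⟨j, rfl⟩ := hk'
        have hij : i ≠ j := fun h => hne (by rw [h])
        rw [Function.onFun, hPe i, hPe j]
        exact hA.disj hij
      · rw [Function.onFun, hPno k' hk']
        exact Set.disjoint_empty _
    · rw [Function.onFun, hPno k hk]
      exact Set.empty_disjoint _
  · apply Set.Subset.antisymm
    · refine Set.iUnion_subset fun k => ?_
      by_cases hk : ∃ i, e i = k
      · obtain ⟨i, rfl⟩ := hk
        rw [hPe i]
        exact hA.subset i
      · rw [hPno k hk]
        exact Set.empty_subset _
    · intro x hx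
      rw [← hA.cover] at hx
      obtain ⟨i, hi⟩ := Set.mem_iUnion.1 hx
      exact Set.mem_iUnion.2 ⟨e i, by rw [hPe i]; exact hi⟩
  · intro k k'
    by_cases hk : ∃ i, e i = k
    · obtain ⟨i, rfl⟩ := hk
      by_cases hk' : ∃ j, e j = k'
      · obtain ⟨j, rfl⟩ := hk'
        rw [hwe i j]
        exact ⟨cavg_nonneg hW_meas hW_range hA i j, cavg_le_one hW_meas hW_range hA i j⟩
      · rw [hwno2 _ _ hk']
        exact ⟨le_refl 0, zero_le_one⟩
    · rw [hwno1 _ _ hk]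
      exact ⟨le_refl 0, zero_le_one⟩
  · intro k k'
    by_cases hk : ∃ i, e i = k
    · obtain ⟨i, rfl⟩ := hk
      by_cases hk' : ∃ j, e j = k'
      · obtain ⟨j, rfl⟩ := hk'
        rw [hwe i j, hwe j i]
        exact cavg_symm hW_symm A i j
      · rw [hwno2 _ _ hk', hwno1 _ _ hk']
    · rw [hwno1 _ _ hk, hwno2 _ _ hk]
  · intro S T hS hT hS1 hT1
    simp only [hstep]
    exact hgood S T hS hT hS1 hT1

lemma log4_lt_two : Real.log 4 < 2 := by
  rw [Real.log_lt_iff_lt_exp (by norm_num)]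
  have h1 := Real.exp_one_gt_d9
  have h2 : Real.exp 2 = Real.exp 1 * Real.exp 1 := by
    rw [← Real.exp_add]; norm_num
  nlinarith

end
end WRL

/-- **Weak Regularity Lemma for graphons.**
For every graphon `W : [0,1]² → [0,1]` (a symmetric Lebesgue-measurable function) and every
`K ≥ 2`, there is a measurable partition `P = (P₁, …, P_K)` of `[0,1]` into `K` measurable
subsets and symmetric coefficients `w k k' ∈ [0,1]` such that the step function
`W_P(x,y) = Σ_{k,k'} w_{kk'} 𝟙_{P_k × P_{k'}}(x,y)` satisfies
`‖W − W_P‖_□ ≤ 2/√(log K)`, i.e. for all measurable `S, T ⊆ [0,1]`,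
`|∫_{S×T} (W − W_P)| ≤ 2/√(log K)`. -/
theorem weak_regularity_lemma_graphon
    (W : ℝ → ℝ → ℝ)
    (hW_meas : Measurable (fun p : ℝ × ℝ => W p.1 p.2))
    (hW_symm : ∀ x y, W x y = W y x)
    (hW_range : ∀ x ∈ Set.Icc (0:ℝ) 1, ∀ y ∈ Set.Icc (0:ℝ) 1, W x y ∈ Set.Icc (0:ℝ) 1)
    (K : ℕ) (hK : 2 ≤ K) :
    ∃ P : Fin K → Set ℝ,
      (∀ k, MeasurableSet (P k)) ∧
      (Pairwise (Function.onFun Disjoint P)) ∧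
      (⋃ k, P k) = Set.Icc (0:ℝ) 1 ∧
      ∃ w : Fin K → Fin K → ℝ,
        (∀ k k', w k k' ∈ Set.Icc (0:ℝ) 1) ∧
        (∀ k k', w k k' = w k' k) ∧
        ∀ S T : Set ℝ, MeasurableSet S → MeasurableSet T →
          S ⊆ Set.Icc (0:ℝ) 1 → T ⊆ Set.Icc (0:ℝ) 1 →
          |∫ p in S ×ˢ T,
              (W p.1 p.2 -
                ∑ k : Fin K, ∑ k' : Fin K,
                  Set.indicator ((P k) ×ˢ (P k')) (fun _ => w k k') p)|
            ≤ 2 / Real.sqrt (Real.log K) := by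
  have hK2 : (2:ℝ) ≤ (K:ℝ) := by exact_mod_cast hK
  have hKpos : (0:ℝ) < K := by linarith
  set L := Real.log K with hLdef
  have hL2 : Real.log 2 ≤ L := (Real.log_le_log_iff (by norm_num) hKpos).2 hK2
  have hLpos : 0 < L := lt_of_lt_of_le (Real.log_pos (by norm_num)) hL2
  have hsq : 0 < Real.sqrt L := Real.sqrt_pos.2 hLpos
  by_cases hL4 : L ≤ 4
  · -- small K : trivial partition works
    have hone : 1 ≤ 2 / Real.sqrt L := by
      rw [le_div_iff₀ hsq]
      have h4 : Real.sqrt L ≤ 2 := by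
        have h := Real.sqrt_le_sqrt hL4
        rwa [show Real.sqrt 4 = 2 by
          rw [show (4:ℝ) = 2^2 by norm_num, Real.sqrt_sq (by norm_num : (0:ℝ) ≤ 2)]] at h
      linarith
    have hKpos' : 0 < K := by omega
    set z : Fin K := ⟨0, hKpos'⟩ with hz
    refine ⟨fun k => if k = z then Set.Icc 0 1 else ∅, ?_, ?_, ?_, fun _ _ => 0, ?_, ?_, ?_⟩
    · intro k
      by_cases h : k = z <;> simp [h]
    · intro k k' hne
      rw [Function.onFun]
      by_cases hk : k = z <;> by_cases hk' : k' = z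
      · exact absurd (hk.trans hk'.symm) hne
      · rw [if_pos hk, if_neg hk']
        exact Set.disjoint_empty _
      · rw [if_neg hk, if_pos hk']
        exact Set.empty_disjoint _
      · rw [if_neg hk, if_neg hk']
        exact Set.empty_disjoint _
    · apply Set.Subset.antisymm
      · refine Set.iUnion_subset fun k => ?_
        by_cases h : k = z
        · rw [if_pos h]
        · rw [if_neg h]
          exact Set.empty_subset _
      · intro x hx
        exact Set.mem_iUnion.2 ⟨z, by rw [if_pos rfl]; exact hx⟩
    · intro k k'
      exact ⟨le_refl 0, zero_le_one⟩
    · intro k k'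
      rfl
    · intro S T hS hT hS1 hT1
      have hsum0 : ∀ p : ℝ × ℝ,
          (∑ k : Fin K, ∑ k' : Fin K,
            Set.indicator (((if k = z then Set.Icc (0:ℝ) 1 else ∅)) ×ˢ
              ((if k' = z then Set.Icc (0:ℝ) 1 else ∅))) (fun _ => (0:ℝ)) p) = 0 := by
        intro p
        refine Finset.sum_eq_zero fun k _ => Finset.sum_eq_zero fun k' _ => ?_
        simp
      simp only [hsum0, sub_zero]
      have hsub : S ×ˢ T ⊆ Set.Icc (0:ℝ) 1 ×ˢ Set.Icc (0:ℝ) 1 := Set.prod_mono hS1 hT1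
      have hfin : volume (S ×ˢ T) < ⊤ :=
        lt_of_le_of_lt (measure_mono hsub) (by rw [WRL.vol_sq01]; exact ENNReal.one_lt_top)
      have hb := norm_setIntegral_le_of_norm_le_const (C := 1) hfin
        (fun p hp => by
          have hx := hW_range p.1 (hS1 hp.1) p.2 (hT1 hp.2)
          rw [Real.norm_eq_abs, abs_le]
          exact ⟨by linarith [hx.1], hx.2⟩)
      rw [Real.norm_eq_abs, measureReal_def] at hb
      have htr : (volume (S ×ˢ T)).toReal ≤ 1 := by
        have hle : volume (S ×ˢ T) ≤ 1 := by
          rw [← WRL.vol_sq01]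
          exact measure_mono hsub
        calc (volume (S ×ˢ T)).toReal ≤ (1 : ENNReal).toReal :=
            ENNReal.toReal_mono ENNReal.one_ne_top hle
          _ = 1 := by simp
      calc |∫ p in S ×ˢ T, W p.1 p.2| ≤ 1 * (volume (S ×ˢ T)).toReal := hb
        _ ≤ 1 := by linarith
        _ ≤ 2 / Real.sqrt L := hone
  · -- large K : weak regularity iteration
    push_neg at hL4
    have hεpos : (0:ℝ) < 2 / Real.sqrt L := by positivity
    set t : ℕ := ⌊L / 4⌋₊ + 1 with ht
    have htgt : L / 4 < (t:ℝ) := by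
      have h := Nat.lt_floor_add_one (L/4)
      rw [ht]
      push_cast
      linarith
    have htle : (t : ℝ) ≤ L / 4 + 1 := by
      have h := Nat.floor_le (by positivity : (0:ℝ) ≤ L / 4)
      rw [ht]
      push_cast
      linarith
    have hlog4pos : 0 < Real.log 4 := Real.log_pos (by norm_num)
    have h4tK : (4:ℕ)^t ≤ K := by
      have h1 : (t : ℝ) * Real.log 4 ≤ L := by nlinarith [WRL.log4_lt_two]
      have h2 : Real.log ((4:ℝ)^t) ≤ Real.log K := by
        rw [Real.log_pow]
        exact h1
      have h3 : (4:ℝ)^t ≤ K := (Real.log_le_log_iff (by positivity) hKpos).1 h2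
      exact_mod_cast h3
    have hteps : 1 < (t:ℝ) * (2 / Real.sqrt L)^2 := by
      have hε2 : (2 / Real.sqrt L)^2 = 4 / L := by
        rw [div_pow, Real.sq_sqrt hLpos.le]
        norm_num
      rw [hε2, ← mul_div_assoc]
      exact (one_lt_div hLpos).2 (by linarith)
    rcases WRL.iterate hW_meas hW_range hεpos t with
      ⟨ι, hf, A, hA, hcard, hgood⟩ | ⟨ι, hf, A, hA, hcard, hen⟩
    · letI := hf
      exact WRL.pad hW_meas hW_symm hW_range hA hgood (le_trans hcard h4tK)
    · exfalso
      letI := hf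
      have h1 := WRL.energy_le_one hW_meas hW_range hA
      nlinarith
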